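/- arXiv:math/0503724 — 4 statements merged into one kernel-verified Lean document; each statement's English description precedes it below -/
import Mathlib

section
/- Let A be a finitely generated abelian topological group isomorphic to ℝ^d × ℤ^e, let W be a finite group of automorphisms of A, and let A₁, …, Aₙ be finitely many nontrivial subgroups of A. Then there exists a nonzero compactly supported distribution f on A (in fact a finite linear combination of point masses) which is W-invariant and vanishes when evaluated on any function that is invariant under translation by some Aᵢ. -/
open Finsupp

/-- Evaluation of a point-mass combination against a test function, as an additive hom. -/
private noncomputable def lamHom {G : Type*} [AddCommGroup G] (g : G → ℂ) :
    AddMonoidAlgebra ℂ G →+ ℂ where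
  toFun c := c.coeff.sum fun a v => v * g a
  map_zero' := Finsupp.sum_zero_index
  map_add' c c' := by
    show (c.coeff + c'.coeff).sum (fun a v => v * g a) = _
    exact Finsupp.sum_add_index' (fun a => zero_mul (g a)) (fun a v w => add_mul v w (g a))

private lemma lamHom_single {G : Type*} [AddCommGroup G] (g : G → ℂ) (x : G) (v : ℂ) :
    lamHom g (AddMonoidAlgebra.single x v) = v * g x := by
  show (Finsupp.single x v).sum (fun a v => v * g a) = v * g x
  exact Finsupp.sum_single_index (zero_mul (g x))

private lemma lamHom_single_mul {G : Type*} [AddCommGroup G] (g : G → ℂ) (b : G)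
    (μ : AddMonoidAlgebra ℂ G) :
    lamHom g (AddMonoidAlgebra.single b 1 * μ) = lamHom (fun x => g (b + x)) μ := by
  induction μ using AddMonoidAlgebra.induction_linear with
  | zero =>
      rw [mul_zero, map_zero, map_zero]
  | add f f' hf hf' =>
      rw [mul_add,
        map_add, map_add, hf, hf']
  | single x v =>
      rw [AddMonoidAlgebra.single_mul_single, one_mul, lamHom_single, lamHom_single]

private lemma one_sub_single_ne_zero {G : Type*} [AddCommGroup G] {x : G} (hx : x ≠ 0) :
    (1 - AddMonoidAlgebra.single x 1 : AddMonoidAlgebra ℂ G) ≠ 0 := by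
  rw [sub_ne_zero, AddMonoidAlgebra.one_def, Ne, eq_comm, AddMonoidAlgebra.single_inj]
  push_neg
  exact ⟨fun h => absurd h hx, fun h => absurd h one_ne_zero⟩

/-- Let `A = ℝ^d × ℤ^e`, let `W` be a finite group of (additive)
automorphisms of `A`, and let `A₁, …, Aₙ` be nontrivial subgroups of `A`. Then there is a
nonzero distribution on `A` which is a finite linear combination of point masses
(encoded as a finitely supported function `c : A →₀ ℂ`, acting on a test function `g`
by `∑ a, c a * g a`), is `W`-invariant, and vanishes on every function invariant under
translation by some `Aᵢ`. -/
theorem stmt0 (d e n : ℕ) (hn : 0 < n)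
    (W : AddSubgroup (AddAut ((Fin d → ℝ) × (Fin e → ℤ))))
    (hWfin : (W : Set (AddAut ((Fin d → ℝ) × (Fin e → ℤ)))).Finite)
    (A : Fin n → AddSubgroup ((Fin d → ℝ) × (Fin e → ℤ)))
    (hA : ∀ i, A i ≠ ⊥) :
    ∃ c : ((Fin d → ℝ) × (Fin e → ℤ)) →₀ ℂ,
      c ≠ 0 ∧
      (∀ w ∈ W, ∀ g : ((Fin d → ℝ) × (Fin e → ℤ)) → ℂ,
        (c.sum fun a v => v * g (w a)) = c.sum fun a v => v * g a) ∧
      (∀ i : Fin n, ∀ g : ((Fin d → ℝ) × (Fin e → ℤ)) → ℂ,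
        (∀ a ∈ A i, ∀ x, g (x + a) = g x) →
        (c.sum fun a v => v * g a) = 0) := by
  classical
  have hpick : ∀ i, ∃ a : (Fin d → ℝ) × (Fin e → ℤ), a ∈ A i ∧ a ≠ 0 := by
    intro i
    obtain ⟨a, ha⟩ := (AddSubgroup.ne_bot_iff_exists_ne_zero).mp (hA i)
    exact ⟨(a : _), a.2, fun h => ha (Subtype.ext h)⟩
  choose a ha ha0 using hpick
  have hmemWF : ∀ w : AddAut ((Fin d → ℝ) × (Fin e → ℤ)),
      w ∈ hWfin.toFinset ↔ w ∈ W := fun w => hWfin.mem_toFinset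
  have h1WF : (0 : AddAut ((Fin d → ℝ) × (Fin e → ℤ))) ∈ hWfin.toFinset :=
    (hmemWF 0).mpr W.zero_mem
  refine ⟨(∏ i : Fin n, ∏ w ∈ hWfin.toFinset,
    (1 - AddMonoidAlgebra.single (w (a i)) 1) :
      AddMonoidAlgebra ℂ ((Fin d → ℝ) × (Fin e → ℤ))).coeff, ?_, ?_, ?_⟩
  · -- nonzero
    refine mt (fun h => AddMonoidAlgebra.coeff_injective (h.trans AddMonoidAlgebra.coeff_zero.symm)) ?_
    show (∏ i : Fin n, ∏ w ∈ hWfin.toFinset,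
      (1 - AddMonoidAlgebra.single (w (a i)) 1) :
        AddMonoidAlgebra ℂ ((Fin d → ℝ) × (Fin e → ℤ))) ≠ 0
    refine Finset.prod_ne_zero_iff.mpr fun i _ => Finset.prod_ne_zero_iff.mpr fun w _ => ?_
    refine one_sub_single_ne_zero fun h => ha0 i ?_
    exact (map_eq_zero_iff _ (AddEquiv.injective w)).mp h
  · -- W-invariance
    intro w hw g
    set f : AddMonoidAlgebra ℂ ((Fin d → ℝ) × (Fin e → ℤ)) :=
      ∏ i : Fin n, ∏ w ∈ hWfin.toFinset, (1 - AddMonoidAlgebra.single (w (a i)) 1)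
      with hf
    have key : AddMonoidAlgebra.mapDomain (w : _ → _) f = f := by
      have h1 : AddMonoidAlgebra.mapDomain (w : _ → _) f =
          AddMonoidAlgebra.mapDomainRingHom ℂ (AddEquiv.toAddMonoidHom w) f := rfl
      rw [h1, hf, map_prod]
      apply Finset.prod_congr rfl
      intro i _
      rw [map_prod]
      have step : ∀ w' ∈ hWfin.toFinset,
          (AddMonoidAlgebra.mapDomainRingHom ℂ (AddEquiv.toAddMonoidHom w))
            (1 - AddMonoidAlgebra.single (w' (a i)) 1)
          = 1 - AddMonoidAlgebra.single ((w + w') (a i)) 1 := by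
        intro w' _
        rw [map_sub, map_one]
        congr 1
        show AddMonoidAlgebra.mapDomain (w : _ → _) (AddMonoidAlgebra.single (w' (a i)) 1) = _
        rw [AddMonoidAlgebra.mapDomain_single]
        rfl
      rw [Finset.prod_congr rfl step]
      refine Finset.prod_nbij' (fun w' => w + w') (fun w' => -w + w') ?_ ?_ ?_ ?_ ?_
      · intro w' hw'
        exact (hmemWF _).mpr (W.add_mem hw ((hmemWF _).mp hw'))
      · intro w' hw'
        exact (hmemWF _).mpr (W.add_mem (W.neg_mem hw) ((hmemWF _).mp hw'))
      · intro w' _; simp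
      · intro w' _; simp
      · intro w' _; rfl
    calc (f.coeff.sum fun x v => v * g (w x))
        = (AddMonoidAlgebra.mapDomain (w : _ → _) f).coeff.sum fun x v => v * g x := by
          rw [AddMonoidAlgebra.coeff_mapDomain, Finsupp.sum_mapDomain_index (fun x => zero_mul (g x))
            (fun x v v' => add_mul v v' (g x))]
      _ = f.coeff.sum fun x v => v * g x := by rw [key]
  · -- vanishing
    intro i g hg
    set f : AddMonoidAlgebra ℂ ((Fin d → ℝ) × (Fin e → ℤ)) :=
      ∏ i : Fin n, ∏ w ∈ hWfin.toFinset, (1 - AddMonoidAlgebra.single (w (a i)) 1)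
      with hf
    obtain ⟨μ, hμ⟩ : ∃ μ : AddMonoidAlgebra ℂ ((Fin d → ℝ) × (Fin e → ℤ)),
        f = (1 - AddMonoidAlgebra.single (a i) 1) * μ := by
      refine ⟨(∏ w ∈ hWfin.toFinset.erase 0, (1 - AddMonoidAlgebra.single (w (a i)) 1)) *
        ∏ j ∈ Finset.univ.erase i, ∏ w ∈ hWfin.toFinset,
          (1 - AddMonoidAlgebra.single (w (a j)) 1), ?_⟩
      rw [hf, ← Finset.mul_prod_erase Finset.univ _ (Finset.mem_univ i),
        ← Finset.mul_prod_erase hWfin.toFinset _ h1WF]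
      simp only [AddAut.zero_apply]
      ring
    show lamHom g f = 0
    rw [hμ, sub_mul, one_mul, map_sub, lamHom_single_mul]
    have : (fun x => g (a i + x)) = g := by
      funext x
      rw [add_comm]
      exact hg (a i) (ha i) x
    rw [this, sub_self]
end

section
/- Let μ_T be the uniform probability measure on the subset B(T) = {(x,y) ∈ ℝ^d × (ℝ/ℤ)^e : ‖x‖ ≤ T} of A = ℝ^d × (ℝ/ℤ)^e, let χ : A → 𝕋^n be a continuous homomorphism to the n-torus, and let ν_T be the pushforward of μ_T under χ. Then as T → ∞ the measures ν_T converge weakly to the Haar probability measure of the closure of the image χ(A) in 𝕋^n. -/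
open MeasureTheory Filter Topology Metric

noncomputable section
namespace Stmt6Aux

abbrev Sp (d e : ℕ) := EuclideanSpace ℝ (Fin d) × (Fin e → AddCircle (1:ℝ))

def Bl (d e : ℕ) (T : ℝ) : Set (Sp d e) := {x | ‖x.1‖ ≤ T}

def mu (d e : ℕ) (T : ℝ) : Measure (Sp d e) :=
  (volume (Bl d e T))⁻¹ • volume.restrict (Bl d e T)

lemma measurableSet_Bl (d e : ℕ) (T : ℝ) : MeasurableSet (Bl d e T) :=
  (isClosed_le continuous_fst.norm continuous_const).measurableSet

lemma vol_Bl (d e : ℕ) {T : ℝ} (hT : 0 ≤ T) :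
    volume (Bl d e T) = ENNReal.ofReal (T ^ d) * volume (ball (0:EuclideanSpace ℝ (Fin d)) 1) := by
  have h1 : Bl d e T = (closedBall (0:EuclideanSpace ℝ (Fin d)) T) ×ˢ Set.univ := by
    ext x; simp [Bl, mem_closedBall_iff_norm]
  have h2 : (volume : Measure (Fin e → AddCircle (1:ℝ))) Set.univ = 1 := by
    rw [MeasureTheory.volume_pi, Measure.pi_univ]; simp [AddCircle.measure_univ]
  rw [h1, Measure.volume_eq_prod, Measure.prod_prod, h2, mul_one,
    Measure.addHaar_closedBall _ _ hT, finrank_euclideanSpace_fin]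

lemma vol_Bl_ne_top (d e : ℕ) {T : ℝ} (hT : 0 ≤ T) : volume (Bl d e T) ≠ ⊤ := by
  rw [vol_Bl d e hT]
  exact ENNReal.mul_ne_top ENNReal.ofReal_ne_top measure_ball_lt_top.ne

lemma vol_Bl_ne_zero (d e : ℕ) {T : ℝ} (hT : 0 < T) : volume (Bl d e T) ≠ 0 := by
  rw [vol_Bl d e hT.le]
  exact mul_ne_zero (by simp [ENNReal.ofReal_eq_zero, not_le, pow_pos hT]) 
    (measure_ball_pos _ _ one_pos).ne'

lemma mu_prob (d e : ℕ) {T : ℝ} (hT : 0 < T) : IsProbabilityMeasure (mu d e T) := by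
  constructor
  rw [mu, Measure.smul_apply, Measure.restrict_apply_univ, smul_eq_mul]
  exact ENNReal.inv_mul_cancel (vol_Bl_ne_zero d e hT) (vol_Bl_ne_top d e hT.le)

lemma integrable_mu (d e : ℕ) {T : ℝ} (hT : 0 < T) {f : Sp d e → ℝ} (hf : Continuous f)
    {M : ℝ} (hM : ∀ x, ‖f x‖ ≤ M) : Integrable f (mu d e T) := by
  haveI := mu_prob d e hT
  exact (integrable_const M).mono' hf.aestronglyMeasurable (Eventually.of_forall hM)

lemma volume_invariant (d e : ℕ) : (volume : Measure (Sp d e)).IsAddRightInvariant := by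
  rw [Measure.volume_eq_prod]; exact Measure.prod.instIsAddRightInvariant

/-- Step F: asymptotic translation invariance. -/
lemma stepF (d e : ℕ) (f : Sp d e → ℝ) (hf : Continuous f) (M : ℝ) (hM : ∀ x, ‖f x‖ ≤ M)
    (a : Sp d e) :
    Tendsto (fun T => ∫ x, (f x - f (x + a)) ∂(mu d e T)) atTop (𝓝 0) := by
  haveI := volume_invariant d e
  have hM0 : 0 ≤ M := le_trans (norm_nonneg _) (hM 0)
  set r : ℝ := ‖a.1‖ with hrdef
  have hr0 : 0 ≤ r := norm_nonneg _
  set κ : ℝ := (volume (ball (0:EuclideanSpace ℝ (Fin d)) 1)).toReal with hκdef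
  have hκpos : 0 < κ := ENNReal.toReal_pos (measure_ball_pos _ _ one_pos).ne' measure_ball_lt_top.ne
  rw [tendsto_zero_iff_norm_tendsto_zero]
  apply squeeze_zero' (Eventually.of_forall fun T => norm_nonneg _)
    (g := fun T => 2*M*((1+r/T)^d - (1-r/T)^d))
  · -- the bound
    filter_upwards [eventually_ge_atTop (max r 1)] with T hT
    have hTr : r ≤ T := le_trans (le_max_left _ _) hT
    have hT1 : (1:ℝ) ≤ T := le_trans (le_max_right _ _) hT
    have hT0 : (0:ℝ) < T := lt_of_lt_of_le one_pos hT1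
    set s : Set (Sp d e) := Bl d e T with hs
    set t : Set (Sp d e) := {y : Sp d e | ‖y.1 - a.1‖ ≤ T} with ht
    set u : Set (Sp d e) := Bl d e (T - r) with hu
    set w : Set (Sp d e) := Bl d e (T + r) with hw
    have htm : MeasurableSet t :=
      (isClosed_le (continuous_fst.sub continuous_const).norm continuous_const).measurableSet
    have hus : u ⊆ s := fun y hy => by
      simp only [hs, hu, Bl, Set.mem_setOf_eq] at hy ⊢; linarith
    have hut : u ⊆ t := fun y hy => by
      simp only [hu, Bl, Set.mem_setOf_eq] at hy
      simp only [ht, Set.mem_setOf_eq]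
      calc ‖y.1 - a.1‖ ≤ ‖y.1‖ + ‖a.1‖ := norm_sub_le _ _
        _ ≤ (T - r) + r := add_le_add hy le_rfl
        _ = T := by ring
    have hsw : s ⊆ w := fun y hy => by
      simp only [hs, hw, Bl, Set.mem_setOf_eq] at hy ⊢; linarith
    have htw : t ⊆ w := fun y hy => by
      simp only [ht, Set.mem_setOf_eq] at hy
      simp only [hw, Bl, Set.mem_setOf_eq]
      calc ‖y.1‖ = ‖(y.1 - a.1) + a.1‖ := by simp
        _ ≤ ‖y.1 - a.1‖ + ‖a.1‖ := norm_add_le _ _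
        _ ≤ T + r := add_le_add hy le_rfl
    have hwtop : volume w ≠ ⊤ := vol_Bl_ne_top d e (by linarith)
    have hstop : volume s ≠ ⊤ := ne_top_of_le_ne_top hwtop (measure_mono hsw)
    have httop : volume t ≠ ⊤ := ne_top_of_le_ne_top hwtop (measure_mono htw)
    have hutop : volume u ≠ ⊤ := ne_top_of_le_ne_top hwtop (measure_mono (hus.trans hsw))
    have hints : IntegrableOn f s volume :=
      Measure.integrableOn_of_bounded hstop hf.aestronglyMeasurable (Eventually.of_forall hM)
    have hintt : IntegrableOn f t volume :=
      Measure.integrableOn_of_bounded httop hf.aestronglyMeasurable (Eventually.of_forall hM)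
    have hintsa : IntegrableOn (fun x => f (x + a)) s volume :=
      Measure.integrableOn_of_bounded hstop
        (hf.comp (continuous_id.add continuous_const)).aestronglyMeasurable
        (Eventually.of_forall fun x => hM _)
    -- translation
    have htr : ∫ x in s, f (x + a) ∂volume = ∫ y in t, f y ∂volume := by
      have hpre : (fun x : Sp d e => x + a) ⁻¹' t = s := by
        ext x
        simp [ht, hs, Bl, Prod.fst_add]
      rw [← hpre]
      exact (measurePreserving_add_right volume a).setIntegral_preimage_emb
        (measurableEmbedding_addRight a) f t
    -- integral over mu
    have hmu : ∫ x, (f x - f (x + a)) ∂(mu d e T)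
        = ((volume s)⁻¹).toReal • ((∫ x in s, f x ∂volume) - ∫ y in t, f y ∂volume) := by
      rw [mu, integral_smul_measure, ← hs, integral_sub hints hintsa, htr]
    -- diff bounds
    have hdiffb : ∀ v : Set (Sp d e), v ⊆ w → volume v ≠ ⊤ → IntegrableOn f v volume →
        u ⊆ v → ‖(∫ x in v, f x ∂volume) - ∫ x in u, f x ∂volume‖
          ≤ M * ((T+r)^d * κ - (T-r)^d * κ) := by
      intro v hvw hvtop hintv huv
      rw [← integral_diff (measurableSet_Bl d e (T - r)) hintv huv]
      have h1 : volume (v \ u) ≤ volume w - volume u := by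
        calc volume (v \ u) ≤ volume (w \ u) := measure_mono (Set.diff_subset_diff_left hvw)
          _ = volume w - volume u := measure_diff (hus.trans hsw) (measurableSet_Bl d e (T - r)).nullMeasurableSet hutop
      have h2 : (volume (v \ u)).toReal ≤ (T+r)^d * κ - (T-r)^d * κ := by
        have hle : volume u ≤ volume w := measure_mono ((huv.trans hvw))
        have h3 : (volume w - volume u).toReal = (T+r)^d * κ - (T-r)^d * κ := by
          rw [ENNReal.toReal_sub_of_le hle hwtop, vol_Bl d e (by linarith : (0:ℝ) ≤ T + r),
            vol_Bl d e (by linarith : (0:ℝ) ≤ T - r), ENNReal.toReal_mul, ENNReal.toReal_mul,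
            ENNReal.toReal_ofReal (pow_nonneg (by linarith) d),
            ENNReal.toReal_ofReal (pow_nonneg (by linarith) d), ← hκdef]
        rw [← h3]
        exact ENNReal.toReal_mono (by simp [ne_eq, ENNReal.sub_eq_top_iff, hwtop]) h1
      calc ‖∫ x in v \ u, f x ∂volume‖ ≤ M * (volume (v \ u)).toReal :=
            norm_setIntegral_le_of_norm_le_const
              (lt_of_le_of_lt (le_of_le_of_eq h1 rfl) (by
                exact lt_of_le_of_lt (tsub_le_self) (lt_top_iff_ne_top.mpr hwtop)))
              (fun x _ => hM x)
        _ ≤ M * ((T+r)^d * κ - (T-r)^d * κ) := by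
            apply mul_le_mul_of_nonneg_left h2 hM0
    have hb1 := hdiffb s hsw hstop hints hus
    have hb2 := hdiffb t htw httop hintt hut
    have hnorm : ‖(∫ x in s, f x ∂volume) - ∫ y in t, f y ∂volume‖
        ≤ 2 * (M * ((T+r)^d * κ - (T-r)^d * κ)) := by
      have : (∫ x in s, f x ∂volume) - ∫ y in t, f y ∂volume
          = ((∫ x in s, f x ∂volume) - ∫ x in u, f x ∂volume)
            - ((∫ x in t, f x ∂volume) - ∫ x in u, f x ∂volume) := by ring
      rw [this]
      calc _ ≤ ‖(∫ x in s, f x ∂volume) - ∫ x in u, f x ∂volume‖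
            + ‖(∫ x in t, f x ∂volume) - ∫ x in u, f x ∂volume‖ := norm_sub_le _ _
        _ ≤ _ := by linarith
    -- assemble
    rw [hmu]
    have hcT : ((volume s)⁻¹).toReal = (T^d * κ)⁻¹ := by
      rw [ENNReal.toReal_inv, hs, vol_Bl d e hT0.le, ENNReal.toReal_mul,
        ENNReal.toReal_ofReal (by positivity), ← hκdef]
    rw [norm_smul, hcT, Real.norm_eq_abs,
      abs_of_nonneg (le_of_lt (inv_pos.mpr (mul_pos (pow_pos hT0 d) hκpos)))]
    have halg : (T^d * κ)⁻¹ * (2 * (M * ((T+r)^d * κ - (T-r)^d * κ)))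
        = 2*M*((1+r/T)^d - (1-r/T)^d) := by
      have h1 : (1 + r/T) = (T+r)/T := by field_simp
      have h2 : (1 - r/T) = (T-r)/T := by field_simp
      rw [h1, h2, div_pow, div_pow]
      have hTd : (0:ℝ) < T^d := pow_pos hT0 d
      field_simp
    rw [← halg]
    have hc0 : (0:ℝ) ≤ (T^d * κ)⁻¹ := le_of_lt (inv_pos.mpr (mul_pos (pow_pos hT0 d) hκpos))
    exact mul_le_mul_of_nonneg_left hnorm hc0
  · -- the limit
    have h1 : Tendsto (fun T:ℝ => r / T) atTop (𝓝 0) := tendsto_const_nhds.div_atTop tendsto_id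
    have h2 : Continuous (fun t:ℝ => (1+t)^d - (1-t)^d) := by fun_prop
    have h3 := (h2.tendsto 0).comp h1
    simp only [Function.comp_def, add_zero, sub_zero, one_pow, sub_self] at h3
    have h4 := h3.const_mul (2*M)
    simpa using h4
end Stmt6Aux
end

open Stmt6Aux

/-- Let `μ_T` be the uniform probability measure on
`B(T) = {(x,y) ∈ ℝ^d × (ℝ/ℤ)^e : ‖x‖ ≤ T}`, let `χ : A → 𝕋^n` be a continuous
homomorphism to the `n`-torus, and let `ν_T = χ_* μ_T`. Then as `T → ∞` the measures
`ν_T` converge weakly to the Haar probability measure `ν` of the closure of the image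
`χ(A)` (characterized as a probability measure concentrated on the closure of the image
and invariant under translation by its elements). -/
theorem stmt6 (d e n : ℕ)
    (χ : (EuclideanSpace ℝ (Fin d) × (Fin e → AddCircle (1 : ℝ))) →+
      (Fin n → AddCircle (1 : ℝ)))
    (hχ : Continuous χ)
    (ν : Measure (Fin n → AddCircle (1 : ℝ))) [IsProbabilityMeasure ν]
    (hfull : ν (closure (Set.range ⇑χ)) = 1)
    (hinv : ∀ h ∈ closure (Set.range ⇑χ), ν.map (· + h) = ν) :
    ∀ g : C(Fin n → AddCircle (1 : ℝ), ℝ),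
      Tendsto (fun T : ℝ =>
          ∫ y, g y ∂(Measure.map (⇑χ)
            ((volume {x : EuclideanSpace ℝ (Fin d) × (Fin e → AddCircle (1 : ℝ)) |
                ‖x.1‖ ≤ T})⁻¹ •
              volume.restrict {x : EuclideanSpace ℝ (Fin d) × (Fin e → AddCircle (1 : ℝ)) |
                ‖x.1‖ ≤ T})))
        atTop (𝓝 (∫ y, g y ∂ν)) := by
  intro g
  set M : ℝ := ‖g‖ with hMdef
  have hgb : ∀ y, ‖g y‖ ≤ M := fun y => g.norm_coe_le_norm y
  have hgc : Continuous g := g.continuous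
  have hM0 : 0 ≤ M := norm_nonneg _
  show Tendsto (fun T : ℝ => ∫ y, g y ∂(Measure.map (⇑χ) (mu d e T))) atTop
    (𝓝 (∫ y, g y ∂ν))
  have hmap : ∀ T : ℝ, ∫ y, g y ∂(Measure.map (⇑χ) (mu d e T)) = ∫ x, g (χ x) ∂(mu d e T) :=
    fun T => integral_map hχ.aemeasurable hgc.aestronglyMeasurable
  simp only [hmap]
  -- the deviation integrand
  set D : ℝ → (Fin n → AddCircle (1:ℝ)) → ℝ :=
    fun T h => ∫ x, (g (χ x) - g (χ x + h)) ∂(mu d e T) with hDdef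
  -- basic integrability facts
  have hintA : ∀ {T : ℝ}, 0 < T → Integrable (fun x => g (χ x)) (mu d e T) :=
    fun hT => integrable_mu d e hT (hgc.comp hχ) (fun x => hgb _)
  have hintB : ∀ {T : ℝ}, 0 < T → ∀ h, Integrable (fun x => g (χ x + h)) (mu d e T) :=
    fun hT h => integrable_mu d e hT (hgc.comp (hχ.add continuous_const)) (fun x => hgb _)
  -- continuity and bound of the inner translated integral
  have hGcont : ∀ {T : ℝ}, 0 < T →
      Continuous (fun h => ∫ x, g (χ x + h) ∂(mu d e T)) := by
    intro T hT
    haveI := mu_prob d e hT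
    apply continuous_of_dominated (bound := fun _ => M)
    · exact fun h => (hgc.comp (hχ.add continuous_const)).aestronglyMeasurable
    · exact fun h => Eventually.of_forall fun x => hgb _
    · exact integrable_const M
    · exact Eventually.of_forall fun x => hgc.comp (continuous_const.add continuous_id)
  -- Claim C : decomposition of the integral
  have claimC : ∀ {T : ℝ}, 0 < T →
      ∫ x, g (χ x) ∂(mu d e T) = (∫ y, g y ∂ν) + ∫ h, D T h ∂ν := by
    intro T hT
    haveI := mu_prob d e hT
    have hGb : ∀ h, ‖∫ x, g (χ x + h) ∂(mu d e T)‖ ≤ M := by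
      intro h
      calc ‖∫ x, g (χ x + h) ∂(mu d e T)‖ ≤ ∫ x, M ∂(mu d e T) :=
            norm_integral_le_of_norm_le (integrable_const M)
              (Eventually.of_forall fun x => hgb _)
        _ = M := by simp
    have hGint : Integrable (fun h => ∫ x, g (χ x + h) ∂(mu d e T)) ν :=
      (integrable_const M).mono' (hGcont hT).aestronglyMeasurable (Eventually.of_forall hGb)
    have hDsub : ∀ h, D T h = (∫ x, g (χ x) ∂(mu d e T)) - ∫ x, g (χ x + h) ∂(mu d e T) :=
      fun h => integral_sub (hintA hT) (hintB hT h)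
    have hswap : ∫ h, (∫ x, g (χ x + h) ∂(mu d e T)) ∂ν = ∫ y, g y ∂ν := by
      have hintprod : Integrable (Function.uncurry fun h x => g (χ x + h))
          (ν.prod (mu d e T)) := by
        apply (integrable_const M).mono'
        · exact (hgc.comp ((hχ.comp continuous_snd).add continuous_fst)).aestronglyMeasurable
        · exact Eventually.of_forall fun p => hgb _
      rw [integral_integral_swap hintprod]
      have hinner : ∀ x, ∫ h, g (χ x + h) ∂ν = ∫ y, g y ∂ν := by
        intro x
        have h1 : ν.map (· + χ x) = ν := hinv _ (subset_closure ⟨x, rfl⟩)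
        calc ∫ h, g (χ x + h) ∂ν = ∫ h, g (h + χ x) ∂ν := by
              simp only [add_comm (χ x)]
          _ = ∫ y, g y ∂(ν.map (· + χ x)) :=
              (integral_map (measurable_add_const (χ x)).aemeasurable
                hgc.aestronglyMeasurable).symm
          _ = ∫ y, g y ∂ν := by rw [h1]
      simp only [hinner]
      simp
    calc ∫ x, g (χ x) ∂(mu d e T)
        = (∫ y, g y ∂ν) + ((∫ x, g (χ x) ∂(mu d e T)) - ∫ y, g y ∂ν) := by ring
      _ = (∫ y, g y ∂ν) + ∫ h, D T h ∂ν := by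
          congr 1
          have hsplit : ∫ h, D T h ∂ν
              = (∫ _h, (∫ x, g (χ x) ∂(mu d e T)) ∂ν)
                - ∫ h, (∫ x, g (χ x + h) ∂(mu d e T)) ∂ν := by
            rw [← integral_sub (integrable_const _) hGint]
            exact integral_congr_ae (Eventually.of_forall fun h => hDsub h)
          rw [hsplit, hswap, integral_const]
          simp
  -- the deviation integral tends to zero
  have hdev : Tendsto (fun T => ∫ h, D T h ∂ν) atTop (𝓝 0) := by
    have h0 : (0:ℝ) = ∫ _h, (0:ℝ) ∂ν := by simp
    rw [h0]
    apply tendsto_integral_filter_of_dominated_convergence (bound := fun _ => 2*M)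
    · filter_upwards [eventually_gt_atTop (0:ℝ)] with T hT
      haveI := mu_prob d e hT
      have : Continuous (D T) := by
        have := (hGcont hT)
        have h2 : D T = fun h => (∫ x, g (χ x) ∂(mu d e T)) - ∫ x, g (χ x + h) ∂(mu d e T) :=
          funext fun h => integral_sub (hintA hT) (hintB hT h)
        rw [h2]; exact continuous_const.sub this
      exact this.aestronglyMeasurable
    · filter_upwards [eventually_gt_atTop (0:ℝ)] with T hT
      haveI := mu_prob d e hT
      refine Eventually.of_forall fun h => ?_
      calc ‖D T h‖ ≤ ∫ x, 2*M ∂(mu d e T) :=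
            norm_integral_le_of_norm_le (integrable_const _)
              (Eventually.of_forall fun x => by
                calc ‖g (χ x) - g (χ x + h)‖ ≤ ‖g (χ x)‖ + ‖g (χ x + h)‖ := norm_sub_le _ _
                  _ ≤ 2*M := by have := hgb (χ x); have := hgb (χ x + h); linarith)
        _ = 2*M := by simp
    · exact integrable_const _
    · -- pointwise limit for a.e. h
      have hae : ∀ᵐ h ∂ν, h ∈ closure (Set.range ⇑χ) := by
        have hc : MeasurableSet (closure (Set.range ⇑χ)) := isClosed_closure.measurableSet
        have h0 : ν (closure (Set.range ⇑χ))ᶜ = 0 := (prob_compl_eq_zero_iff hc).mpr hfull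
        exact mem_ae_iff.mpr h0
      filter_upwards [hae] with h hmem
      -- Step E
      rw [NormedAddCommGroup.tendsto_nhds_zero]
      intro ε hε
      have hu : UniformContinuous g := CompactSpace.uniformContinuous_of_continuous hgc
      rcases Metric.uniformContinuous_iff.mp hu (ε/3) (by positivity) with ⟨δ, hδ, hδ'⟩
      rcases Metric.mem_closure_iff.mp hmem δ hδ with ⟨b, hbmem, hbd⟩
      obtain ⟨a, rfl⟩ := hbmem
      have hF := stepF d e (fun x => g (χ x)) (hgc.comp hχ) M (fun x => hgb _) a
      have hF' := NormedAddCommGroup.tendsto_nhds_zero.mp hF (ε/3) (by positivity)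
      filter_upwards [hF', eventually_gt_atTop (0:ℝ)] with T hT1 hT0
      haveI := mu_prob d e hT0
      have hintC : Integrable (fun x => g (χ (x + a))) (mu d e T) :=
        integrable_mu d e hT0 (hgc.comp (hχ.comp (continuous_id.add continuous_const)))
          (fun x => hgb _)
      have key : D T h = (∫ x, (g (χ x) - g (χ (x + a))) ∂(mu d e T))
          + ∫ x, (g (χ (x + a)) - g (χ x + h)) ∂(mu d e T) := by
        simp only [hDdef]
        rw [integral_sub (hintA hT0) (hintB hT0 h),
          integral_sub (hintA hT0) hintC,
          integral_sub hintC (hintB hT0 h)]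
        ring
      have hkb : ‖∫ x, (g (χ (x + a)) - g (χ x + h)) ∂(mu d e T)‖ ≤ ε/3 := by
        calc ‖∫ x, (g (χ (x + a)) - g (χ x + h)) ∂(mu d e T)‖
            ≤ ∫ _x, ε/3 ∂(mu d e T) := by
              apply norm_integral_le_of_norm_le (integrable_const _)
              refine Eventually.of_forall fun x => ?_
              have hd : dist (χ (x + a)) (χ x + h) < δ := by
                rw [map_add, dist_add_left]
                rw [dist_comm] at hbd
                exact hbd
              have := hδ' hd
              rw [dist_eq_norm] at this
              exact this.le
          _ = ε/3 := by simp
      have h1' : ‖∫ x, (g (χ x) - g (χ (x + a))) ∂(mu d e T)‖ < ε/3 := by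
        simpa using hT1
      rw [key]
      calc ‖_ + _‖ ≤ ‖∫ x, (g (χ x) - g (χ (x + a))) ∂(mu d e T)‖
            + ‖∫ x, (g (χ (x + a)) - g (χ x + h)) ∂(mu d e T)‖ := norm_add_le _ _
        _ < ε := by linarith
  -- conclude
  have hfinal : Tendsto (fun T => (∫ y, g y ∂ν) + ∫ h, D T h ∂ν) atTop
      (𝓝 ((∫ y, g y ∂ν) + 0)) := tendsto_const_nhds.add hdev
  rw [add_zero] at hfinal
  apply hfinal.congr'
  filter_upwards [eventually_gt_atTop (0:ℝ)] with T hT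
  exact (claimC hT).symm
end

section
/- Suppose ψ is a holomorphic function on ℂ^n invariant under the complex orthogonal group O(n,ℂ) acting linearly. Then ψ(ν) depends only on the quadratic form ⟨ν,ν⟩ = ∑νᵢ²: there is a holomorphic function g on ℂ such that ψ(ν) = g(⟨ν,ν⟩) for all ν. -/
open Matrix Complex Filter Topology

variable {n : ℕ}

private lemma stmt13_refl_exists (u : Fin n → ℂ) (hu : u ⬝ᵥ u ≠ 0) :
    ∃ A : Matrix (Fin n) (Fin n) ℂ, A.transpose * A = 1 ∧
      ∀ x : Fin n → ℂ, A.mulVec x = x - (2 * (u ⬝ᵥ x) / (u ⬝ᵥ u)) • u := by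
  set c : ℂ := 2 / (u ⬝ᵥ u) with hc
  refine ⟨1 - c • vecMulVec u u, ?_, ?_⟩
  · have hsymm : (vecMulVec u u)ᵀ = vecMulVec u u := by
      ext i j; simp [vecMulVec_apply, mul_comm]
    have hM2 : vecMulVec u u * vecMulVec u u = (u ⬝ᵥ u) • vecMulVec u u := by
      ext i j
      simp only [mul_apply, vecMulVec_apply, Matrix.smul_apply, smul_eq_mul, dotProduct,
        Finset.sum_mul]
      exact Finset.sum_congr rfl fun k _ => by ring
    have hcc : c * c * (u ⬝ᵥ u) = c + c := by
      rw [hc]; field_simp; ring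
    rw [transpose_sub, transpose_smul, transpose_one, hsymm]
    rw [sub_mul, mul_sub, mul_sub, one_mul, mul_one, smul_mul_smul_comm, hM2]
    rw [smul_smul, hcc, add_smul]
    simp
  · intro x
    have hMv : (vecMulVec u u).mulVec x = (u ⬝ᵥ x) • u := by
      ext i
      simp only [mulVec, dotProduct, vecMulVec_apply, Pi.smul_apply, smul_eq_mul,
        Finset.mul_sum]
      rw [Finset.sum_mul]
      exact Finset.sum_congr rfl fun k _ => by ring
    rw [sub_mulVec, one_mulVec, smul_mulVec, hMv, smul_smul, hc]
    congr 1
    ring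

private lemma stmt13_step (ψ : (Fin n → ℂ) → ℂ)
    (hinv : ∀ A : Matrix (Fin n) (Fin n) ℂ, A.transpose * A = 1 →
      ∀ v : Fin n → ℂ, ψ (A.mulVec v) = ψ v)
    (v w : Fin n → ℂ) (hQ : v ⬝ᵥ v = w ⬝ᵥ w) (hvw : (v - w) ⬝ᵥ (v - w) ≠ 0) :
    ψ v = ψ w := by
  obtain ⟨A, hA, hAx⟩ := stmt13_refl_exists (v - w) hvw
  have key := hinv A hA v
  have hmul : A.mulVec v = w := by
    rw [hAx]
    have h1 : (v - w) ⬝ᵥ v = v ⬝ᵥ v - w ⬝ᵥ v := by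
      simp [sub_dotProduct]
    have h2 : (v - w) ⬝ᵥ (v - w) = 2 * (v ⬝ᵥ v - w ⬝ᵥ v) := by
      simp only [sub_dotProduct, dotProduct_sub]
      rw [dotProduct_comm v w, ← hQ]
      ring
    have hd : v ⬝ᵥ v - w ⬝ᵥ v ≠ 0 := by
      intro h0; apply hvw; rw [h2, h0, mul_zero]
    have hone : 2 * ((v ⬝ᵥ v - w ⬝ᵥ v) / (2 * (v ⬝ᵥ v - w ⬝ᵥ v))) = 1 := by
      field_simp
    rw [h1, h2, mul_div_assoc, hone, one_smul, sub_sub_cancel]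
  rw [hmul] at key
  exact key.symm

private lemma stmt13_neg_step (ψ : (Fin n → ℂ) → ℂ)
    (hinv : ∀ A : Matrix (Fin n) (Fin n) ℂ, A.transpose * A = 1 →
      ∀ v : Fin n → ℂ, ψ (A.mulVec v) = ψ v)
    (w : Fin n → ℂ) : ψ (-w) = ψ w := by
  have key := hinv (-1) (by simp) w
  rwa [neg_mulVec, one_mulVec] at key

/-- A holomorphic function `ψ` on `ℂ^n` (`n ≥ 2`) invariant under the
complex orthogonal group `O(n,ℂ)` depends only on the quadratic form `⟨ν,ν⟩ = ∑ νᵢ²`: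
there is an entire function `g : ℂ → ℂ` with `ψ(ν) = g(∑ νᵢ²)`. -/
theorem stmt13 (n : ℕ) (hn : 2 ≤ n) (ψ : (Fin n → ℂ) → ℂ)
    (hψ : Differentiable ℂ ψ)
    (hinv : ∀ A : Matrix (Fin n) (Fin n) ℂ, A.transpose * A = 1 →
      ∀ v : Fin n → ℂ, ψ (A.mulVec v) = ψ v) :
    ∃ g : ℂ → ℂ, Differentiable ℂ g ∧ ∀ v : Fin n → ℂ, ψ v = g (∑ i, v i ^ 2) := by
  classical
  set i0 : Fin n := ⟨0, by omega⟩
  set i1 : Fin n := ⟨1, by omega⟩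
  have hi01 : i0 ≠ i1 := by simp [i0, i1, Fin.ext_iff]
  set f : ℂ → (Fin n → ℂ) := fun z i =>
    if i = i0 then (z + 1) / 2 else if i = i1 then Complex.I * (z - 1) / 2 else 0 with hf
  have hfQ : ∀ z, f z ⬝ᵥ f z = z := by
    intro z
    rw [dotProduct]
    rw [← Finset.sum_subset (Finset.subset_univ ({i0, i1} : Finset (Fin n)))
      (fun x _ hx => by
        simp only [Finset.mem_insert, Finset.mem_singleton, not_or] at hx
        simp [hf, hx.1, hx.2])]
    rw [Finset.sum_pair hi01]
    simp only [hf, if_pos rfl, if_neg hi01.symm, if_neg hi01, if_pos rfl]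
    have : Complex.I * Complex.I = -1 := Complex.I_mul_I
    field_simp
    ring_nf
    simp only [if_true]
    ring_nf
    rw [Complex.I_sq]
    ring
  have hfdiff : Differentiable ℂ f := by
    rw [differentiable_pi]
    intro i
    simp only [hf]
    split_ifs <;> fun_prop
  set g : ℂ → ℂ := fun z => ψ (f z) with hg
  have hgdiff : Differentiable ℂ g := hψ.comp hfdiff
  -- key lemma: Q v ≠ 0 implies ψ v = g (Q v)
  have key : ∀ v : Fin n → ℂ, v ⬝ᵥ v ≠ 0 → ψ v = g (v ⬝ᵥ v) := by
    intro v hv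
    set w := f (v ⬝ᵥ v) with hw
    have hQw : w ⬝ᵥ w = v ⬝ᵥ v := hfQ _
    by_cases hcase : (v - w) ⬝ᵥ (v - w) ≠ 0
    · exact stmt13_step ψ hinv v w hQw.symm hcase
    · push_neg at hcase
      have hsum : (v - w) ⬝ᵥ (v - w) + (v + w) ⬝ᵥ (v + w) = 4 * (v ⬝ᵥ v) := by
        simp only [sub_dotProduct, dotProduct_sub, add_dotProduct, dotProduct_add, hQw]
        ring
      have hplus : (v - (-w)) ⬝ᵥ (v - (-w)) ≠ 0 := by
        rw [sub_neg_eq_add]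
        intro h0
        rw [hcase, h0, zero_add] at hsum
        apply hv
        have h4 : (4:ℂ) ≠ 0 := by norm_num
        field_simp at hsum
        exact (mul_eq_zero.mp hsum.symm).resolve_left h4
      have h1 : ψ v = ψ (-w) := stmt13_step ψ hinv v (-w) (by simp [hQw]) hplus
      rw [h1, stmt13_neg_step ψ hinv]
  -- limit lemma
  have lim : ∀ (v u : Fin n → ℂ), (∀ᶠ t in 𝓝[≠] (0:ℂ), (v + t • u) ⬝ᵥ (v + t • u) ≠ 0) →
      ψ v = g (v ⬝ᵥ v) := by
    intro v u hev
    have h1 : Filter.Tendsto (fun t : ℂ => ψ (v + t • u)) (𝓝[≠] 0) (𝓝 (ψ v)) := by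
      have : ContinuousAt (fun t : ℂ => ψ (v + t • u)) 0 := by
        apply hψ.continuous.continuousAt.comp
        fun_prop
      simpa using this.continuousWithinAt.tendsto
    have h2 : Filter.Tendsto (fun t : ℂ => g ((v + t • u) ⬝ᵥ (v + t • u))) (𝓝[≠] 0)
        (𝓝 (g (v ⬝ᵥ v))) := by
      have : ContinuousAt (fun t : ℂ => g ((v + t • u) ⬝ᵥ (v + t • u))) 0 := by
        apply hgdiff.continuous.continuousAt.comp
        have : Continuous fun t : ℂ => (v + t • u) ⬝ᵥ (v + t • u) := by
          simp only [dotProduct]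
          fun_prop
        exact this.continuousAt
      simpa using this.continuousWithinAt.tendsto
    have heq : (fun t : ℂ => ψ (v + t • u)) =ᶠ[𝓝[≠] 0]
        (fun t : ℂ => g ((v + t • u) ⬝ᵥ (v + t • u))) := by
      filter_upwards [hev] with t ht
      exact key _ ht
    exact tendsto_nhds_unique (h1.congr' heq) h2
  refine ⟨g, hgdiff, fun v => ?_⟩
  have hQ : ∑ i, v i ^ 2 = v ⬝ᵥ v := by
    simp [dotProduct, sq]
  rw [hQ]
  by_cases hv : v ⬝ᵥ v ≠ 0
  · exact key v hv
  push_neg at hv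
  by_cases hv0 : v = 0
  · -- use u = e_{i0}
    set e0 : Fin n → ℂ := Pi.single i0 1 with he0
    apply lim v e0
    have hd : ∀ t : ℂ, (v + t • e0) ⬝ᵥ (v + t • e0) = t * t := by
      intro t
      subst hv0
      rw [zero_add, smul_dotProduct, dotProduct_smul, he0, dotProduct_single]
      simp
    filter_upwards [self_mem_nhdsWithin] with t ht
    rw [hd t]
    exact mul_ne_zero ht ht
  · -- use u = conj v
    set u : Fin n → ℂ := fun i => starRingEnd ℂ (v i) with hu
    have hvu : v ⬝ᵥ u ≠ 0 := by
      have hcast : v ⬝ᵥ u = ((∑ i, Complex.normSq (v i) : ℝ) : ℂ) := by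
        push_cast
        refine Finset.sum_congr rfl fun i _ => ?_
        rw [hu, ← Complex.mul_conj]
      rw [hcast]
      rw [Complex.ofReal_ne_zero]
      obtain ⟨i, hi⟩ := Function.ne_iff.mp hv0
      have hpos : 0 < ∑ i, Complex.normSq (v i) :=
        Finset.sum_pos' (fun j _ => Complex.normSq_nonneg _)
          ⟨i, Finset.mem_univ i, Complex.normSq_pos.mpr (by simpa using hi)⟩
      exact ne_of_gt hpos
    apply lim v u
    have hexp : ∀ t : ℂ, (v + t • u) ⬝ᵥ (v + t • u) = t * (2 * (v ⬝ᵥ u) + t * (u ⬝ᵥ u)) := by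
      intro t
      simp only [dotProduct_add, add_dotProduct, smul_dotProduct, dotProduct_smul,
        smul_eq_mul, hv, dotProduct_comm u v]
      ring
    have hcont : ∀ᶠ t in 𝓝 (0:ℂ), 2 * (v ⬝ᵥ u) + t * (u ⬝ᵥ u) ≠ 0 := by
      have hc : ContinuousAt (fun t : ℂ => 2 * (v ⬝ᵥ u) + t * (u ⬝ᵥ u)) 0 := by fun_prop
      apply hc.eventually_ne
      simpa using mul_ne_zero two_ne_zero hvu
    filter_upwards [eventually_nhdsWithin_of_eventually_nhds hcont, self_mem_nhdsWithin]
      with t h1 h2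
    rw [hexp t]
    exact mul_ne_zero h2 h1
end

section
/- Let (a_ν) be a sequence of nonnegative reals indexed by a countable set ℰ with a weight ‖ν‖ ≥ 0, and suppose h : [0,∞) → [0,1] is measurable with h(s) ≥ 1 − ε for 0 ≤ s ≤ √(1−ε), h(s) ≤ 1 for all s, and h(s) ≤ ε(1+s)^{−(d+1)} for s ≥ 1. Assume #{ν : ‖ν‖ ≤ R} ≤ C R^d for all R ≥ 1, and that ∑_ν h(t‖ν‖) = (α + O(ε)) t^{−d} as t → 0. Then (α − O(ε)) t^{−d} ≤ #{ν : ‖ν‖ < 1/t} ≤ (1−ε)^{−1}(α + O(ε)) (t/√(1−ε))^{−d} for all sufficiently small t, where the implied constants depend only on C, d. -/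
open Finset in
lemma tail_sum_le {ι : Type} (d : ℕ) (C ε t : ℝ) (hC : 0 < C) (hε : 0 < ε)
    (ht : 0 < t) (ht1 : t < 1)
    (nrm : ι → ℝ) (h : ℝ → ℝ)
    (hdecay : ∀ s : ℝ, 1 ≤ s → h s ≤ ε / (1 + s) ^ (d + 1))
    (hfin : ∀ R : ℝ, 1 ≤ R → {ν : ι | nrm ν ≤ R}.Finite)
    (hcount : ∀ R : ℝ, 1 ≤ R → ({ν : ι | nrm ν ≤ R}.ncard : ℝ) ≤ C * R ^ d)
    (F : Finset ι) (hF : ∀ ν ∈ F, 1 ≤ t * nrm ν) :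
    ∑ ν ∈ F, h (t * nrm ν) ≤ C * 2 ^ (d + 1) * ε / t ^ d := by
  classical
  set m : ι → ℕ := fun ν => Nat.log 2 ⌊t * nrm ν⌋₊ with hm
  have hbracket : ∀ ν ∈ F, (2 : ℝ) ^ (m ν) ≤ t * nrm ν ∧ t * nrm ν < 2 ^ (m ν + 1) := by
    intro ν hν
    set x := t * nrm ν with hx
    have hx1 : (1 : ℝ) ≤ x := hF ν hν
    have hx0 : (0 : ℝ) ≤ x := by linarith
    have hn1 : 1 ≤ ⌊x⌋₊ := Nat.le_floor (by exact_mod_cast hx1)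
    constructor
    · calc (2 : ℝ) ^ (m ν) = ((2 ^ (m ν) : ℕ) : ℝ) := by push_cast; ring
        _ ≤ (⌊x⌋₊ : ℝ) := by
            exact_mod_cast Nat.pow_log_le_self 2 (Nat.one_le_iff_ne_zero.mp hn1)
        _ ≤ x := Nat.floor_le hx0
    · have h1 : ⌊x⌋₊ < 2 ^ (m ν + 1) := Nat.lt_pow_succ_log_self one_lt_two _
      have h2 : x < (⌊x⌋₊ : ℝ) + 1 := Nat.lt_floor_add_one x
      have h3 : ((⌊x⌋₊ : ℕ) : ℝ) + 1 ≤ ((2 ^ (m ν + 1) : ℕ) : ℝ) := by exact_mod_cast h1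
      calc x < (⌊x⌋₊ : ℝ) + 1 := h2
        _ ≤ ((2 ^ (m ν + 1) : ℕ) : ℝ) := h3
        _ = 2 ^ (m ν + 1) := by push_cast; ring
  have hfib := Finset.sum_fiberwise_of_maps_to
    (g := m) (t := F.image m) (fun ν hν => Finset.mem_image_of_mem m hν)
    (fun ν => h (t * nrm ν))
  rw [← hfib]
  have hfiber_bound : ∀ k ∈ F.image m,
      ∑ ν ∈ F.filter (fun ν => m ν = k), h (t * nrm ν)
        ≤ (C * 2 ^ d * ε / t ^ d) * (1 / 2 : ℝ) ^ k := by
    intro k _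
    have hterm : ∀ ν ∈ F.filter (fun ν => m ν = k),
        h (t * nrm ν) ≤ ε / (2 : ℝ) ^ (k * (d + 1)) := by
      intro ν hν
      rw [Finset.mem_filter] at hν
      obtain ⟨hνF, hνk⟩ := hν
      have hb := hbracket ν hνF
      have hx1 : (1 : ℝ) ≤ t * nrm ν := hF ν hνF
      have h2k : (2 : ℝ) ^ k ≤ t * nrm ν := by rw [← hνk]; exact hb.1
      have h2k' : (2 : ℝ) ^ k ≤ 1 + t * nrm ν := by linarith
      have hpow : (2 : ℝ) ^ (k * (d + 1)) ≤ (1 + t * nrm ν) ^ (d + 1) := by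
        rw [pow_mul]
        exact pow_le_pow_left₀ (by positivity) h2k' _
      calc h (t * nrm ν) ≤ ε / (1 + t * nrm ν) ^ (d + 1) := hdecay _ hx1
        _ ≤ ε / (2 : ℝ) ^ (k * (d + 1)) := by
            apply div_le_div_of_nonneg_left hε.le (by positivity) hpow
    have hcard : ((F.filter (fun ν => m ν = k)).card : ℝ) ≤ C * (2 ^ (k + 1) / t) ^ d := by
      have hR : (1 : ℝ) ≤ 2 ^ (k + 1) / t := by
        rw [one_le_div ht]
        calc t ≤ 1 := ht1.le
          _ ≤ 2 ^ (k + 1) := one_le_pow₀ (by norm_num)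
      have hsub : (↑(F.filter (fun ν => m ν = k)) : Set ι) ⊆
          {ν : ι | nrm ν ≤ 2 ^ (k + 1) / t} := by
        intro ν hν
        simp only [Finset.coe_filter, Set.mem_setOf_eq] at hν ⊢
        obtain ⟨hνF, hνk⟩ := hν
        have hb := (hbracket ν hνF).2
        rw [hνk] at hb
        rw [le_div_iff₀ ht, mul_comm]
        exact hb.le
      calc ((F.filter (fun ν => m ν = k)).card : ℝ)
          = ((↑(F.filter (fun ν => m ν = k)) : Set ι).ncard : ℝ) := by
            rw [Set.ncard_coe_finset]
        _ ≤ ({ν : ι | nrm ν ≤ 2 ^ (k + 1) / t}.ncard : ℝ) := by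
            exact_mod_cast Nat.cast_le.mpr (Set.ncard_le_ncard hsub (hfin _ hR))
        _ ≤ C * (2 ^ (k + 1) / t) ^ d := hcount _ hR
    have e1 : ((2 : ℝ) ^ (k + 1)) ^ d = 2 ^ d * 2 ^ (k * d) := by
      rw [← pow_mul, ← pow_add]; congr 1; try ring
    have e2 : ((2 : ℝ)) ^ (k * (d + 1)) = 2 ^ (k * d) * 2 ^ k := by
      rw [← pow_add]; congr 1; try ring
    calc ∑ ν ∈ F.filter (fun ν => m ν = k), h (t * nrm ν)
        ≤ (F.filter (fun ν => m ν = k)).card • (ε / (2 : ℝ) ^ (k * (d + 1))) :=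
          Finset.sum_le_card_nsmul _ _ _ hterm
      _ = ((F.filter (fun ν => m ν = k)).card : ℝ) * (ε / (2 : ℝ) ^ (k * (d + 1))) := by
          rw [nsmul_eq_mul]
      _ ≤ (C * (2 ^ (k + 1) / t) ^ d) * (ε / (2 : ℝ) ^ (k * (d + 1))) := by
          apply mul_le_mul_of_nonneg_right hcard (by positivity)
      _ = (C * 2 ^ d * ε / t ^ d) * (1 / 2 : ℝ) ^ k := by
          rw [div_pow, e1, e2, one_div, inv_pow]
          have h1 : (t : ℝ) ^ d ≠ 0 := by positivity
          have h2 : ((2 : ℝ) ^ (k * d)) ≠ 0 := by positivity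
          have h3 : ((2 : ℝ) ^ k) ≠ 0 := by positivity
          field_simp
  calc ∑ k ∈ F.image m, ∑ ν ∈ F.filter (fun ν => m ν = k), h (t * nrm ν)
      ≤ ∑ k ∈ F.image m, (C * 2 ^ d * ε / t ^ d) * (1 / 2 : ℝ) ^ k :=
        Finset.sum_le_sum hfiber_bound
    _ ≤ ∑ k ∈ Finset.range ((F.image m).sup id + 1), (C * 2 ^ d * ε / t ^ d) * (1 / 2 : ℝ) ^ k := by
        apply Finset.sum_le_sum_of_subset_of_nonneg
        · intro k hk
          simp only [Finset.mem_range]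
          exact Nat.lt_succ_of_le (Finset.le_sup (f := id) hk)
        · intro k _ _
          positivity
    _ = (C * 2 ^ d * ε / t ^ d) * ∑ k ∈ Finset.range ((F.image m).sup id + 1), (1 / 2 : ℝ) ^ k := by
        rw [Finset.mul_sum]
    _ ≤ (C * 2 ^ d * ε / t ^ d) * 2 :=
        mul_le_mul_of_nonneg_left (sum_geometric_two_le _) (by positivity)
    _ = C * 2 ^ (d + 1) * ε / t ^ d := by rw [pow_succ]; ring

lemma smoothed_split {ι : Type} (d : ℕ) (C ε t : ℝ) (hC : 0 < C) (hε : 0 < ε)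
    (ht : 0 < t) (ht1 : t < 1)
    (nrm : ι → ℝ) (hnrm : ∀ ν, 0 ≤ nrm ν) (h : ℝ → ℝ)
    (h01 : ∀ s : ℝ, 0 ≤ s → 0 ≤ h s ∧ h s ≤ 1)
    (hdecay : ∀ s : ℝ, 1 ≤ s → h s ≤ ε / (1 + s) ^ (d + 1))
    (hfin : ∀ R : ℝ, 1 ≤ R → {ν : ι | nrm ν ≤ R}.Finite)
    (hcount : ∀ R : ℝ, 1 ≤ R → ({ν : ι | nrm ν ≤ R}.ncard : ℝ) ≤ C * R ^ d) :
    Summable (fun ν : ι => h (t * nrm ν)) ∧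
    ∑' ν : ι, h (t * nrm ν) ≤
      ({ν : ι | nrm ν < 1 / t}.ncard : ℝ) + C * 2 ^ (d + 1) * ε / t ^ d := by
  classical
  set f : ι → ℝ := fun ν => h (t * nrm ν) with hf
  have hf0 : ∀ ν, 0 ≤ f ν := fun ν => (h01 _ (mul_nonneg ht.le (hnrm ν))).1
  have hf1 : ∀ ν, f ν ≤ 1 := fun ν => (h01 _ (mul_nonneg ht.le (hnrm ν))).2
  set S : Set ι := {ν : ι | nrm ν < 1 / t} with hSdef
  have h1t : (1 : ℝ) ≤ 1 / t := by
    rw [le_div_iff₀ ht]; linarith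
  have hS : S.Finite := (hfin (1 / t) h1t).subset (fun ν (hν : nrm ν < 1 / t) => le_of_lt hν)
  haveI : Finite ↥S := hS.to_subtype
  have hcompl1 : ∀ ν : ι, ν ∈ Sᶜ → 1 ≤ t * nrm ν := by
    intro ν hν
    have h2 : 1 / t ≤ nrm ν := not_lt.mp hν
    calc (1 : ℝ) = t * (1 / t) := by field_simp
      _ ≤ t * nrm ν := mul_le_mul_of_nonneg_left h2 ht.le
  have htail : ∀ u : Finset ↥(Sᶜ), ∑ x ∈ u, f ↑x ≤ C * 2 ^ (d + 1) * ε / t ^ d := by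
    intro u
    have heq : ∑ x ∈ u, f ↑x = ∑ ν ∈ u.map (Function.Embedding.subtype _), f ν := by
      rw [Finset.sum_map]; rfl
    rw [heq]
    apply tail_sum_le d C ε t hC hε ht ht1 nrm h hdecay hfin hcount
    intro ν hν
    rw [Finset.mem_map] at hν
    obtain ⟨x, _, rfl⟩ := hν
    exact hcompl1 _ x.2
  have hsumc : Summable (fun x : ↥(Sᶜ) => f ↑x) :=
    summable_of_sum_le (fun x => hf0 _) htail
  have hsums : Summable (fun x : ↥S => f ↑x) := Summable.of_finite
  have hsum : Summable f := summable_subtype_and_compl.mp ⟨hsums, hsumc⟩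
  refine ⟨hsum, ?_⟩
  have hsplit : (∑' x : ↥S, f ↑x) + (∑' x : ↥(Sᶜ), f ↑x) = ∑' ν, f ν :=
    Summable.tsum_add_tsum_compl hsums hsumc
  have htailtsum : (∑' x : ↥(Sᶜ), f ↑x) ≤ C * 2 ^ (d + 1) * ε / t ^ d :=
    Summable.tsum_le_of_sum_le hsumc htail
  have hhead : (∑' x : ↥S, f ↑x) ≤ (S.ncard : ℝ) := by
    have e1 : (∑' x : ↥S, f ↑x) = ∑ ν ∈ hS.toFinset, f ν := by
      rw [tsum_subtype]
      rw [tsum_eq_sum (s := hS.toFinset) (f := S.indicator f)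
        (fun ν hν => Set.indicator_of_notMem (fun hmem => hν (hS.mem_toFinset.mpr hmem)) f)]
      apply Finset.sum_congr rfl
      intro ν hν
      exact Set.indicator_of_mem (hS.mem_toFinset.mp hν) f
    rw [e1, Set.ncard_eq_toFinset_card S hS]
    calc ∑ ν ∈ hS.toFinset, f ν ≤ hS.toFinset.card • (1 : ℝ) :=
          Finset.sum_le_card_nsmul _ _ _ (fun ν _ => hf1 ν)
      _ = (hS.toFinset.card : ℝ) := by rw [nsmul_eq_mul, mul_one]
  linarith

lemma arith2 (α B D ε P Q dd : ℝ) (hα : 0 < α) (hB : 0 < B) (hε : 0 < ε)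
    (hD0 : 0 ≤ D) (hPber : 1 - dd * ε ≤ P) (hPhalf : Q ≤ P) (hQ0 : 0 ≤ Q)
    (he3' : α * dd + B ≤ D * (B + 1) * Q) :
    α + B * ε ≤ (α + D * (B + 1) * ε) * P := by
  have e1 : α * (1 - dd * ε) ≤ α * P := mul_le_mul_of_nonneg_left hPber hα.le
  have e2 : D * (B + 1) * ε * Q ≤ D * (B + 1) * ε * P :=
    mul_le_mul_of_nonneg_left hPhalf
      (mul_nonneg (mul_nonneg hD0 (by linarith)) hε.le)
  have e3 : (α * dd + B) * ε ≤ D * (B + 1) * Q * ε :=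
    mul_le_mul_of_nonneg_right he3' hε.le
  nlinarith [e1, e2, e3]

/-- Counting from smoothed counts. Suppose `h : [0,∞) → [0,1]` with
`h(s) ≥ 1−ε` for `0 ≤ s ≤ √(1−ε)` and `h(s) ≤ ε(1+s)^{−(d+1)}` for `s ≥ 1`, the
counting function satisfies `#{ν : ‖ν‖ ≤ R} ≤ C R^d` for `R ≥ 1`, and
`∑_ν h(t‖ν‖) = (α + O(ε)) t^{−d}` (with constant `B`) as `t → 0`. Then for all
sufficiently small `t`,
`(α − O(ε)) t^{−d} ≤ #{ν : ‖ν‖ < 1/t} ≤ (1−ε)^{−1}(α + O(ε)) (t/√(1−ε))^{−d}`,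
with implied constants depending only on `C, d` (times `B+1`). -/
theorem stmt16 (d : ℕ) (hd : 1 ≤ d) (C : ℝ) (hC : 0 < C) :
    ∃ D : ℝ, 0 < D ∧
      ∀ (ι : Type) (_ : Countable ι) (nrm : ι → ℝ), (∀ ν, 0 ≤ nrm ν) →
        ∀ ε : ℝ, 0 < ε → ε < 1 / 2 →
        ∀ α : ℝ, 0 < α → ∀ B : ℝ, 0 < B →
        ∀ h : ℝ → ℝ, (∀ s : ℝ, 0 ≤ s → 0 ≤ h s ∧ h s ≤ 1) →
        (∀ s : ℝ, 0 ≤ s → s ≤ Real.sqrt (1 - ε) → 1 - ε ≤ h s) →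
        (∀ s : ℝ, 1 ≤ s → h s ≤ ε / (1 + s) ^ (d + 1)) →
        (∀ R : ℝ, 1 ≤ R → {ν : ι | nrm ν ≤ R}.Finite) →
        (∀ R : ℝ, 1 ≤ R → ({ν : ι | nrm ν ≤ R}.ncard : ℝ) ≤ C * R ^ d) →
        (∃ t₀ : ℝ, 0 < t₀ ∧ ∀ t : ℝ, 0 < t → t < t₀ →
          |t ^ d * (∑' ν : ι, h (t * nrm ν)) - α| ≤ B * ε) →
        ∃ t₁ : ℝ, 0 < t₁ ∧ ∀ t : ℝ, 0 < t → t < t₁ →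
          α - D * (B + 1) * ε ≤ t ^ d * ({ν : ι | nrm ν < 1 / t}.ncard : ℝ) ∧
          t ^ d * ({ν : ι | nrm ν < 1 / t}.ncard : ℝ) ≤
            (1 - ε)⁻¹ * (α + D * (B + 1) * ε) * Real.sqrt (1 - ε) ^ d := by
  refine ⟨2 ^ d * ((d : ℝ) + 1) * (C * 2 ^ (d + 2) + 1) + C * 2 ^ (d + 1) + 1,
    by positivity, ?_⟩
  intro ι _ nrm hnrm ε hε hε2 α hα B hB h h01 hlow hdecay hfin hcount hasymp
  obtain ⟨t₀, ht₀, hA⟩ := hasymp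
  set D : ℝ := 2 ^ d * ((d : ℝ) + 1) * (C * 2 ^ (d + 2) + 1) + C * 2 ^ (d + 1) + 1 with hDdef
  have hdpos : (0 : ℝ) ≤ (d : ℝ) := Nat.cast_nonneg d
  have h2d1 : (1 : ℝ) ≤ 2 ^ d := one_le_pow₀ one_le_two
  have hZpos : (0 : ℝ) < ((d : ℝ) + 1) * (C * 2 ^ (d + 2) + 1) := by positivity
  have hDZ : 2 ^ d * (((d : ℝ) + 1) * (C * 2 ^ (d + 2) + 1)) ≤ D := by
    have h0 : (0 : ℝ) ≤ C * 2 ^ (d + 1) + 1 := by positivity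
    have e : (2 : ℝ) ^ d * (((d : ℝ) + 1) * (C * 2 ^ (d + 2) + 1))
        = 2 ^ d * ((d : ℝ) + 1) * (C * 2 ^ (d + 2) + 1) := by ring
    rw [hDdef]; linarith
  have hDK : C * 2 ^ (d + 1) + 1 ≤ D := by
    have h0 : (0 : ℝ) ≤ 2 ^ d * ((d : ℝ) + 1) * (C * 2 ^ (d + 2) + 1) := by positivity
    rw [hDdef]; linarith
  have hD1 : (1 : ℝ) ≤ D := by
    have h0 : (0 : ℝ) ≤ C * 2 ^ (d + 1) := by positivity
    linarith [hDK]
  refine ⟨min (t₀ / 2) (1 / 2), by positivity, ?_⟩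
  intro t ht htlt
  have ht1 : t < 1 / 2 := lt_of_lt_of_le htlt (min_le_right _ _)
  have htt0 : t < t₀ := by
    have := lt_of_lt_of_le htlt (min_le_left _ _); linarith
  have ht1' : t < 1 := by linarith
  obtain ⟨hsumf, htsumle⟩ :=
    smoothed_split d C ε t hC hε ht ht1' nrm hnrm h h01 hdecay hfin hcount
  set S : Set ι := {ν : ι | nrm ν < 1 / t} with hSdef
  set N : ℝ := (S.ncard : ℝ) with hNdef
  set T : ℝ := ∑' ν : ι, h (t * nrm ν) with hTdef
  have hTa := hA t ht htt0
  rw [abs_le] at hTa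
  rw [← hTdef] at hTa
  have htd : (0 : ℝ) < t ^ d := pow_pos ht d
  have h1t : (1 : ℝ) ≤ 1 / t := by rw [le_div_iff₀ ht]; linarith
  have hsub : S ⊆ {ν : ι | nrm ν ≤ 1 / t} := fun ν (hν : nrm ν < 1 / t) => le_of_lt hν
  have hSfin : S.Finite := (hfin (1 / t) h1t).subset hsub
  have hNC : t ^ d * N ≤ C := by
    have h5 : N ≤ C * (1 / t) ^ d :=
      le_trans (by exact_mod_cast Nat.cast_le.mpr (Set.ncard_le_ncard hsub (hfin _ h1t)))
        (hcount _ h1t)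
    calc t ^ d * N ≤ t ^ d * (C * (1 / t) ^ d) := mul_le_mul_of_nonneg_left h5 htd.le
      _ = C := by field_simp; rw [← mul_pow, mul_one_div_cancel ht.ne', one_pow]
  have hsplit2 : t ^ d * T ≤ t ^ d * N + C * 2 ^ (d + 1) * ε := by
    have h1 : t ^ d * T ≤ t ^ d * (N + C * 2 ^ (d + 1) * ε / t ^ d) :=
      mul_le_mul_of_nonneg_left htsumle htd.le
    have h2 : t ^ d * (N + C * 2 ^ (d + 1) * ε / t ^ d) = t ^ d * N + C * 2 ^ (d + 1) * ε := by
      field_simp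
    linarith
  constructor
  · -- lower bound
    have hDB : B ≤ D * B := le_mul_of_one_le_left hB.le hD1
    have h4 : B + C * 2 ^ (d + 1) ≤ D * (B + 1) := by
      have e : D * (B + 1) = D * B + D := by ring
      linarith [hDK, hDB]
    have h5 : (B + C * 2 ^ (d + 1)) * ε ≤ D * (B + 1) * ε :=
      mul_le_mul_of_nonneg_right h4 hε.le
    linarith [hTa.1, hsplit2, h5]
  · -- upper bound
    have hαM : α ≤ B + C * 2 ^ (d + 2) := by
      have h6 : α ≤ t ^ d * T + B * ε := by linarith [hTa.1]
      have e1 : (2 : ℝ) ^ (d + 1) = 2 * 2 ^ d := by rw [pow_succ]; ring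
      have e2 : (2 : ℝ) ^ (d + 2) = 4 * 2 ^ d := by rw [pow_add]; ring
      have p1 : C * 2 ^ (d + 1) * ε ≤ C * 2 ^ (d + 1) * (1 / 2) :=
        mul_le_mul_of_nonneg_left (le_of_lt hε2) (by positivity)
      have p2 : B * ε ≤ B * (1 / 2) := mul_le_mul_of_nonneg_left (le_of_lt hε2) hB.le
      have p3 : C ≤ C * 2 ^ d := le_mul_of_one_le_right hC.le h2d1
      rw [e2]
      rw [e1] at p1
      rw [e1] at hsplit2
      linarith [h6, hsplit2, hNC, p1, p2, p3]
    set q : ℝ := Real.sqrt (1 - ε) with hqdef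
    have h1ε : (0 : ℝ) < 1 - ε := by linarith
    have hq : 0 < q := Real.sqrt_pos.mpr h1ε
    have hq2 : q ^ 2 = 1 - ε := Real.sq_sqrt h1ε.le
    have hq1 : q ≤ 1 := Real.sqrt_le_one.mpr (by linarith)
    set s : ℝ := t * q with hsdef
    have hs0 : 0 < s := mul_pos ht hq
    have hs_le : s ≤ t := by
      calc s = t * q := hsdef
        _ ≤ t * 1 := mul_le_mul_of_nonneg_left hq1 ht.le
        _ = t := mul_one t
    have hs1 : s < 1 := lt_of_le_of_lt hs_le ht1'
    have hst0 : s < t₀ := lt_of_le_of_lt hs_le htt0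
    obtain ⟨hsumg, _⟩ :=
      smoothed_split d C ε s hC hε hs0 hs1 nrm hnrm h h01 hdecay hfin hcount
    have hTg := hA s hs0 hst0
    rw [abs_le] at hTg
    set Tg : ℝ := ∑' ν : ι, h (s * nrm ν) with hTgdef
    have hTgn : 0 ≤ Tg :=
      tsum_nonneg (fun ν => (h01 _ (mul_nonneg hs0.le (hnrm ν))).1)
    have hcard : (1 - ε) * N ≤ ∑ ν ∈ hSfin.toFinset, h (s * nrm ν) := by
      have hterm : ∀ ν ∈ hSfin.toFinset, 1 - ε ≤ h (s * nrm ν) := by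
        intro ν hν
        have hνS : nrm ν < 1 / t := hSfin.mem_toFinset.mp hν
        have h7 : t * nrm ν < 1 := by
          have := (lt_div_iff₀ ht).mp hνS
          linarith [this]
        have h8 : s * nrm ν ≤ q := by
          calc s * nrm ν = q * (t * nrm ν) := by rw [hsdef]; ring
            _ ≤ q * 1 := mul_le_mul_of_nonneg_left h7.le hq.le
            _ = q := mul_one q
        exact hlow _ (mul_nonneg hs0.le (hnrm ν)) h8
      calc (1 - ε) * N = hSfin.toFinset.card • (1 - ε) := by
            rw [nsmul_eq_mul, hNdef, Set.ncard_eq_toFinset_card S hSfin]; ring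
        _ ≤ ∑ ν ∈ hSfin.toFinset, h (s * nrm ν) :=
            Finset.card_nsmul_le_sum _ _ _ hterm
    have hstt : ∑ ν ∈ hSfin.toFinset, h (s * nrm ν) ≤ Tg :=
      Summable.sum_le_tsum _ (fun ν _ => (h01 _ (mul_nonneg hs0.le (hnrm ν))).1) hsumg
    have h9 : s ^ d * Tg ≤ α + B * ε := by linarith [hTg.2]
    have hsd : s ^ d = t ^ d * q ^ d := mul_pow t q d
    have hqd : 0 < q ^ d := pow_pos hq d
    have hber : 1 - (d : ℝ) * ε ≤ (1 - ε) ^ d := by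
      have h10 := one_add_mul_le_pow (a := -ε) (by linarith) d
      rw [show (1 : ℝ) + -ε = 1 - ε by ring] at h10
      linarith
    have hhalf : (1 / 2 : ℝ) ^ d ≤ (1 - ε) ^ d :=
      pow_le_pow_left₀ (by norm_num) (by linarith) d
    have hpow2 : (2 : ℝ) ^ d * (1 / 2 : ℝ) ^ d = 1 := by
      rw [← mul_pow]; norm_num
    have hZ : α * (d : ℝ) + B ≤ ((d : ℝ) + 1) * (C * 2 ^ (d + 2) + 1) * (B + 1) := by
      have a1 : α * (d : ℝ) ≤ (B + C * 2 ^ (d + 2)) * (d : ℝ) :=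
        mul_le_mul_of_nonneg_right hαM hdpos
      have q1 : (0 : ℝ) ≤ (d : ℝ) * (C * 2 ^ (d + 2)) * B := by positivity
      have q2 : (0 : ℝ) ≤ (C * 2 ^ (d + 2)) * B := by positivity
      have q3 : (0 : ℝ) ≤ (C * 2 ^ (d + 2)) := by positivity
      linarith [a1, q1, q2, q3, hdpos]
    have hW : ((d : ℝ) + 1) * (C * 2 ^ (d + 2) + 1) ≤ D * (1 / 2 : ℝ) ^ d := by
      have h11 := mul_le_mul_of_nonneg_right hDZ
        (pow_nonneg (by norm_num : (0 : ℝ) ≤ 1 / 2) d)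
      have e : 2 ^ d * (((d : ℝ) + 1) * (C * 2 ^ (d + 2) + 1)) * (1 / 2 : ℝ) ^ d
          = ((d : ℝ) + 1) * (C * 2 ^ (d + 2) + 1) := by
        calc 2 ^ d * (((d : ℝ) + 1) * (C * 2 ^ (d + 2) + 1)) * (1 / 2 : ℝ) ^ d
            = ((d : ℝ) + 1) * (C * 2 ^ (d + 2) + 1) * ((2 : ℝ) ^ d * (1 / 2 : ℝ) ^ d) := by
              ring
          _ = ((d : ℝ) + 1) * (C * 2 ^ (d + 2) + 1) := by rw [hpow2, mul_one]
      linarith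
    have e3' : α * (d : ℝ) + B ≤ D * (B + 1) * (1 / 2 : ℝ) ^ d := by
      have h12 : ((d : ℝ) + 1) * (C * 2 ^ (d + 2) + 1) * (B + 1)
          ≤ D * (1 / 2 : ℝ) ^ d * (B + 1) :=
        mul_le_mul_of_nonneg_right hW (by linarith)
      linarith [hZ, h12]
    have claim2 : α + B * ε ≤ (α + D * (B + 1) * ε) * (1 - ε) ^ d :=
      arith2 α B D ε ((1 - ε) ^ d) ((1 / 2 : ℝ) ^ d) (d : ℝ) hα hB hε
        (by linarith) hber hhalf (by positivity) e3'
    have h12 : (1 - ε) * N * (t ^ d * q ^ d) ≤ (α + D * (B + 1) * ε) * (1 - ε) ^ d := by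
      have h13 : (1 - ε) * N * s ^ d ≤ Tg * s ^ d :=
        mul_le_mul_of_nonneg_right (le_trans hcard hstt) (by positivity)
      rw [hsd] at h9 h13
      linarith [h13, h9, claim2]
    have h13 : (1 - ε) ^ d = q ^ d * q ^ d := by
      rw [← hq2, ← pow_mul, two_mul, pow_add]
    have h14 : (1 - ε) * N * t ^ d ≤ (α + D * (B + 1) * ε) * q ^ d := by
      apply le_of_mul_le_mul_right _ hqd
      calc (1 - ε) * N * t ^ d * q ^ d = (1 - ε) * N * (t ^ d * q ^ d) := by ring
        _ ≤ (α + D * (B + 1) * ε) * (1 - ε) ^ d := h12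
        _ = (α + D * (B + 1) * ε) * q ^ d * q ^ d := by rw [h13]; ring
    have hinv : 0 < (1 - ε)⁻¹ := inv_pos.mpr h1ε
    have h15 := mul_le_mul_of_nonneg_left h14 hinv.le
    have e : (1 - ε)⁻¹ * ((1 - ε) * N * t ^ d) = t ^ d * N := by
      field_simp
    calc t ^ d * N = (1 - ε)⁻¹ * ((1 - ε) * N * t ^ d) := e.symm
      _ ≤ (1 - ε)⁻¹ * ((α + D * (B + 1) * ε) * q ^ d) := h15
      _ = (1 - ε)⁻¹ * (α + D * (B + 1) * ε) * q ^ d := by ring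
end
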